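/- Let γ = (γ_1, …, γ_n) ∈ ℂⁿ and let H_ss = Σ_{j=1}^n γ_j x_j y_j in ℂ[x_1, …, x_n, y_1, …, y_n]. Let H_nil be a homogeneous polynomial of degree 2 such that {H_ss, H_nil} = 0 and such that the derivation P ↦ {H_nil, P} is locally nilpotent (for every polynomial P there is an r ≥ 1 such that the r-fold iterated bracket {H_nil, {H_nil, …, {H_nil, P}…}} vanishes), and set H_2 = H_ss + H_nil. Then for every k ≥ 3 and every homogeneous polynomial P of degree k there exist homogeneous polynomials L and P' of degree k such that P = −{H_2, L} + P' and {H_ss, P'} = 0. -/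

import Mathlib

open MvPolynomial

/-- The standard Poisson bracket `{H, F} = Σ_j (∂H/∂x_j ∂F/∂y_j − ∂H/∂y_j ∂F/∂x_j)`
on `ℂ[x_1, …, x_n, y_1, …, y_n]`, where `x_j = X (Sum.inl j)` and `y_j = X (Sum.inr j)`. -/
noncomputable def poissonBracket {n : ℕ} (H F : MvPolynomial (Fin n ⊕ Fin n) ℂ) :
    MvPolynomial (Fin n ⊕ Fin n) ℂ :=
  ∑ j : Fin n,
    (pderiv (Sum.inl j) H * pderiv (Sum.inr j) F
      - pderiv (Sum.inr j) H * pderiv (Sum.inl j) F)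

namespace NFAux

variable {n : ℕ}

/-- Poisson bracket with a fixed first argument, as a linear map. -/
noncomputable def pbL (H : MvPolynomial (Fin n ⊕ Fin n) ℂ) :
    MvPolynomial (Fin n ⊕ Fin n) ℂ →ₗ[ℂ] MvPolynomial (Fin n ⊕ Fin n) ℂ where
  toFun := poissonBracket H
  map_add' F G := by
    unfold poissonBracket
    rw [← Finset.sum_add_distrib]
    refine Finset.sum_congr rfl fun j _ => ?_
    rw [map_add, map_add]; ring
  map_smul' c F := by
    unfold poissonBracket
    simp only [RingHom.id_apply, Finset.smul_sum]
    refine Finset.sum_congr rfl fun j _ => ?_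
    rw [Derivation.map_smul, Derivation.map_smul, smul_sub, mul_smul_comm, mul_smul_comm]

lemma pbL_apply (H F : MvPolynomial (Fin n ⊕ Fin n) ℂ) :
    pbL H F = poissonBracket H F := rfl

lemma pb_add_left (H₁ H₂ F : MvPolynomial (Fin n ⊕ Fin n) ℂ) :
    poissonBracket (H₁ + H₂) F = poissonBracket H₁ F + poissonBracket H₂ F := by
  unfold poissonBracket
  rw [← Finset.sum_add_distrib]
  refine Finset.sum_congr rfl fun j _ => ?_
  rw [map_add, map_add]; ring


/-- The `γ`-weight of an exponent vector. -/
noncomputable def wt (γ : Fin n → ℂ) (α : (Fin n ⊕ Fin n) →₀ ℕ) : ℂ :=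
  ∑ j : Fin n, γ j * ((α (Sum.inr j) : ℂ) - (α (Sum.inl j) : ℂ))

/-- A polynomial is concentrated in weight `μ`. -/
def HasWt (γ : Fin n → ℂ) (μ : ℂ) (F : MvPolynomial (Fin n ⊕ Fin n) ℂ) : Prop :=
  ∀ α ∈ F.support, wt γ α = μ

variable {γ : Fin n → ℂ} {μ ν : ℂ} {F G : MvPolynomial (Fin n ⊕ Fin n) ℂ}

lemma hasWt_zero : HasWt γ μ (0 : MvPolynomial (Fin n ⊕ Fin n) ℂ) := by
  intro α hα; simp at hα

lemma HasWt.add (hF : HasWt γ μ F) (hG : HasWt γ μ G) : HasWt γ μ (F + G) := by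
  intro α hα
  rcases Finset.mem_union.mp (MvPolynomial.support_add hα) with h | h
  · exact hF α h
  · exact hG α h

lemma HasWt.smul (hF : HasWt γ μ F) (c : ℂ) : HasWt γ μ (c • F) := by
  intro α hα
  exact hF α (MvPolynomial.support_smul hα)

lemma HasWt.neg (hF : HasWt γ μ F) : HasWt γ μ (-F) := by
  have := hF.smul (-1 : ℂ); simpa using this

lemma HasWt.sub (hF : HasWt γ μ F) (hG : HasWt γ μ G) : HasWt γ μ (F - G) := by
  rw [sub_eq_add_neg]; exact hF.add hG.neg

lemma HasWt.sum {ι : Type*} (s : Finset ι) (f : ι → MvPolynomial (Fin n ⊕ Fin n) ℂ)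
    (h : ∀ i ∈ s, HasWt γ μ (f i)) : HasWt γ μ (∑ i ∈ s, f i) := by
  classical
  induction s using Finset.induction_on with
  | empty => simpa using (hasWt_zero (γ := γ) (μ := μ))
  | insert _ _ hni ih =>
    rw [Finset.sum_insert hni]
    exact (h _ (Finset.mem_insert_self _ _)).add
      (ih fun i hi => h i (Finset.mem_insert_of_mem hi))

lemma wt_add (α β : (Fin n ⊕ Fin n) →₀ ℕ) : wt γ (α + β) = wt γ α + wt γ β := by
  unfold wt
  rw [← Finset.sum_add_distrib]
  refine Finset.sum_congr rfl fun j _ => ?_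
  simp only [Finsupp.add_apply, Nat.cast_add]; ring

lemma HasWt.mul (hF : HasWt γ μ F) (hG : HasWt γ ν G) : HasWt γ (μ + ν) (F * G) := by
  classical
  intro α hα
  have h := MvPolynomial.support_mul F G hα
  rw [Finset.mem_add] at h
  obtain ⟨β, hβ, δ, hδ, rfl⟩ := h
  rw [wt_add, hF β hβ, hG δ hδ]



lemma support_pderiv {σ : Type*} [DecidableEq σ] (i : σ) (F : MvPolynomial σ ℂ) :
    ∀ β ∈ (pderiv i F).support, ∃ α ∈ F.support, α i ≠ 0 ∧ β = α - Finsupp.single i 1 := by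
  intro β hβ
  have hF : pderiv i F = ∑ α ∈ F.support,
      monomial (α - Finsupp.single i 1) (coeff α F * (α i : ℂ)) := by
    conv_lhs => rw [F.as_sum]
    rw [map_sum]
    exact Finset.sum_congr rfl fun α _ => by rw [pderiv_monomial]
  rw [hF] at hβ
  obtain ⟨α, hα, hβ'⟩ := Finset.mem_biUnion.mp (MvPolynomial.support_sum hβ)
  have : (coeff α F * (α i : ℂ)) ≠ 0 := by
    intro h; rw [h] at hβ'; simp at hβ'
  refine ⟨α, hα, ?_, ?_⟩
  · intro h; apply this; rw [h]; simp
  · have := MvPolynomial.support_monomial_subset hβ'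
    simpa using this

lemma wt_sub_single_inl {α : (Fin n ⊕ Fin n) →₀ ℕ} {j : Fin n}
    (h : α (Sum.inl j) ≠ 0) :
    wt γ (α - Finsupp.single (Sum.inl j) 1) = wt γ α + γ j := by
  unfold wt
  have key : ∀ j' : Fin n,
      γ j' * ((((α - Finsupp.single (Sum.inl j) 1 : (Fin n ⊕ Fin n) →₀ ℕ) (Sum.inr j') : ℕ) : ℂ)
        - (((α - Finsupp.single (Sum.inl j) 1 : (Fin n ⊕ Fin n) →₀ ℕ) (Sum.inl j') : ℕ) : ℂ))
      = γ j' * ((α (Sum.inr j') : ℂ) - (α (Sum.inl j') : ℂ))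
        + (if j' = j then γ j else 0) := by
    intro j'
    rcases eq_or_ne j' j with rfl | hne
    · rw [Finsupp.tsub_apply, Finsupp.tsub_apply]
      rw [Finsupp.single_eq_of_ne (by simp), Finsupp.single_eq_same]
      have h1 : ((α (Sum.inl j') - 1 : ℕ) : ℂ) = (α (Sum.inl j') : ℂ) - 1 := by
        rw [Nat.cast_sub (Nat.one_le_iff_ne_zero.mpr h)]; simp
      simp only [Nat.sub_zero, h1, if_pos rfl, eq_self_iff_true, if_true]; ring
    · rw [Finsupp.tsub_apply, Finsupp.tsub_apply]
      rw [Finsupp.single_eq_of_ne (by simp), Finsupp.single_eq_of_ne (by simp [Ne.symm, hne])]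
      simp [hne]
  rw [Finset.sum_congr rfl fun j' _ => key j', Finset.sum_add_distrib,
    Finset.sum_ite_eq' Finset.univ j fun _ => γ j]
  simp

lemma wt_sub_single_inr {α : (Fin n ⊕ Fin n) →₀ ℕ} {j : Fin n}
    (h : α (Sum.inr j) ≠ 0) :
    wt γ (α - Finsupp.single (Sum.inr j) 1) = wt γ α - γ j := by
  unfold wt
  have key : ∀ j' : Fin n,
      γ j' * ((((α - Finsupp.single (Sum.inr j) 1 : (Fin n ⊕ Fin n) →₀ ℕ) (Sum.inr j') : ℕ) : ℂ)
        - (((α - Finsupp.single (Sum.inr j) 1 : (Fin n ⊕ Fin n) →₀ ℕ) (Sum.inl j') : ℕ) : ℂ))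
      = γ j' * ((α (Sum.inr j') : ℂ) - (α (Sum.inl j') : ℂ))
        - (if j' = j then γ j else 0) := by
    intro j'
    rcases eq_or_ne j' j with rfl | hne
    · rw [Finsupp.tsub_apply, Finsupp.tsub_apply]
      rw [Finsupp.single_eq_same, Finsupp.single_eq_of_ne (by simp)]
      have h1 : ((α (Sum.inr j') - 1 : ℕ) : ℂ) = (α (Sum.inr j') : ℂ) - 1 := by
        rw [Nat.cast_sub (Nat.one_le_iff_ne_zero.mpr h)]; simp
      simp only [Nat.sub_zero, h1, if_pos rfl, eq_self_iff_true, if_true]; ring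
    · rw [Finsupp.tsub_apply, Finsupp.tsub_apply]
      rw [Finsupp.single_eq_of_ne (by simp [Ne.symm, hne]), Finsupp.single_eq_of_ne (by simp)]
      simp [hne]
  rw [Finset.sum_congr rfl fun j' _ => key j', Finset.sum_sub_distrib,
    Finset.sum_ite_eq' Finset.univ j fun _ => γ j]
  simp

lemma HasWt.pderiv_inl (hF : HasWt γ μ F) (j : Fin n) :
    HasWt γ (μ + γ j) (pderiv (Sum.inl j) F) := by
  intro β hβ
  obtain ⟨α, hα, hne, rfl⟩ := support_pderiv (Sum.inl j) F β hβ
  rw [wt_sub_single_inl hne, hF α hα]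

lemma HasWt.pderiv_inr (hF : HasWt γ μ F) (j : Fin n) :
    HasWt γ (μ - γ j) (pderiv (Sum.inr j) F) := by
  intro β hβ
  obtain ⟨α, hα, hne, rfl⟩ := support_pderiv (Sum.inr j) F β hβ
  rw [wt_sub_single_inr hne, hF α hα]

lemma IsHomogeneous.pderiv_aux {σ : Type*} [DecidableEq σ] {F : MvPolynomial σ ℂ} {m : ℕ}
    (hF : F.IsHomogeneous m) (i : σ) : (pderiv i F).IsHomogeneous (m - 1) := by
  intro β hβ
  have hβ' : β ∈ (pderiv i F).support := by rwa [MvPolynomial.mem_support_iff]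
  obtain ⟨α, hα, hne, rfl⟩ := support_pderiv i F β hβ'
  have hdeg : (Finsupp.weight 1) α = m := hF (MvPolynomial.mem_support_iff.mp hα)
  have hle : Finsupp.single i 1 ≤ α := by
    rw [Finsupp.single_le_iff]; omega
  have hsplit : (α - Finsupp.single i 1) + Finsupp.single i 1 = α := tsub_add_cancel_of_le hle
  have hsum : (Finsupp.weight 1) (α - Finsupp.single i 1)
      + (Finsupp.weight 1) (Finsupp.single i (1:ℕ)) = m := by
    rw [← map_add, hsplit]; exact hdeg
  have hs : (Finsupp.weight (1 : σ → ℕ)) (Finsupp.single i (1:ℕ)) = 1 := by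
    simp [Finsupp.weight_apply, Finsupp.sum_single_index]
  show (Finsupp.weight 1) (α - Finsupp.single i 1) = m - 1
  omega


lemma X_mul_pderiv_monomial {σ : Type*} [DecidableEq σ] (i : σ) (α : σ →₀ ℕ) (c : ℂ) :
    X i * pderiv i (monomial α c) = (α i : ℂ) • monomial α c := by
  rw [pderiv_monomial]
  rcases Nat.eq_zero_or_pos (α i) with h | h
  · simp [h]
  · rw [X, monomial_mul, smul_monomial]
    congr 1
    · rw [add_comm, tsub_add_cancel_of_le (by rwa [Finsupp.single_le_iff])]
    · rw [smul_eq_mul]; ring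

lemma pderiv_Hss_inl (i : Fin n) :
    pderiv (Sum.inl i) (∑ j : Fin n, C (γ j) * X (Sum.inl j) * X (Sum.inr j))
      = C (γ i) * X (Sum.inr i) := by
  rw [map_sum]
  rw [Finset.sum_eq_single i]
  · rw [mul_assoc, pderiv_C_mul, pderiv_mul, pderiv_X_self,
      pderiv_X_of_ne (by simp), mul_zero, add_zero, one_mul]
  · intro j _ hne
    rw [mul_assoc, pderiv_C_mul, pderiv_mul, pderiv_X_of_ne (by simp [hne]),
      pderiv_X_of_ne (by simp), mul_zero, add_zero, zero_mul, mul_zero]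
  · simp

lemma pderiv_Hss_inr (i : Fin n) :
    pderiv (Sum.inr i) (∑ j : Fin n, C (γ j) * X (Sum.inl j) * X (Sum.inr j))
      = C (γ i) * X (Sum.inl i) := by
  rw [map_sum]
  rw [Finset.sum_eq_single i]
  · rw [mul_assoc, pderiv_C_mul, pderiv_mul, pderiv_X_of_ne (by simp),
      pderiv_X_self, zero_mul, zero_add, mul_one]
  · intro j _ hne
    rw [mul_assoc, pderiv_C_mul, pderiv_mul, pderiv_X_of_ne (by simp),
      pderiv_X_of_ne (by simp [hne]), zero_mul, mul_zero, add_zero, mul_zero]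
  · simp

lemma pb_Hss_monomial (α : (Fin n ⊕ Fin n) →₀ ℕ) (c : ℂ) :
    poissonBracket (∑ j : Fin n, C (γ j) * X (Sum.inl j) * X (Sum.inr j)) (monomial α c)
      = wt γ α • monomial α c := by
  unfold poissonBracket
  rw [wt, Finset.sum_smul]
  refine Finset.sum_congr rfl fun j _ => ?_
  rw [pderiv_Hss_inl, pderiv_Hss_inr, mul_assoc, mul_assoc,
    X_mul_pderiv_monomial, X_mul_pderiv_monomial, C_mul', C_mul',
    smul_smul, smul_smul, ← sub_smul]
  congr 1
  ring



variable {γ : Fin n → ℂ} {μ ν : ℂ} {F G H : MvPolynomial (Fin n ⊕ Fin n) ℂ}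

lemma pb_Hss_of_hasWt (hF : HasWt γ μ F) :
    poissonBracket (∑ j : Fin n, C (γ j) * X (Sum.inl j) * X (Sum.inr j)) F = μ • F := by
  conv_lhs => rw [F.as_sum]
  rw [← pbL_apply, map_sum]
  have : ∀ α ∈ F.support,
      pbL (∑ j : Fin n, C (γ j) * X (Sum.inl j) * X (Sum.inr j)) (monomial α (coeff α F))
        = μ • monomial α (coeff α F) := by
    intro α hα
    rw [pbL_apply, pb_Hss_monomial, hF α hα]
  rw [Finset.sum_congr rfl this, ← Finset.smul_sum, ← F.as_sum]

lemma hasWt_of_pb_eq_zero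
    (h : poissonBracket (∑ j : Fin n, C (γ j) * X (Sum.inl j) * X (Sum.inr j)) F = 0) :
    HasWt γ 0 F := by
  classical
  intro α₀ hα₀
  have hpb : poissonBracket (∑ j : Fin n, C (γ j) * X (Sum.inl j) * X (Sum.inr j)) F
      = ∑ α ∈ F.support, wt γ α • monomial α (coeff α F) := by
    conv_lhs => rw [F.as_sum]
    rw [← pbL_apply, map_sum]
    exact Finset.sum_congr rfl fun α _ => by rw [pbL_apply, pb_Hss_monomial]
  have hc := congrArg (coeff α₀) (hpb.symm.trans h)
  rw [coeff_sum, coeff_zero] at hc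
  rw [Finset.sum_eq_single α₀ (fun α _ hne => by
      rw [coeff_smul, coeff_monomial, if_neg hne, smul_zero])
    (fun hn => absurd hα₀ hn)] at hc
  rw [coeff_smul, coeff_monomial, if_pos rfl, smul_eq_mul] at hc
  exact (mul_eq_zero.mp hc).resolve_right (MvPolynomial.mem_support_iff.mp hα₀)

lemma pb_isHomogeneous {k : ℕ} (hH : H.IsHomogeneous 2) (hk : 1 ≤ k)
    (hF : F.IsHomogeneous k) : (poissonBracket H F).IsHomogeneous k := by
  unfold poissonBracket
  refine MvPolynomial.IsHomogeneous.sum _ _ _ fun j _ => ?_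
  have h1 : (1 : ℕ) + (k - 1) = k := by omega
  have t1 := (IsHomogeneous.pderiv_aux hH (Sum.inl j)).mul
    (IsHomogeneous.pderiv_aux hF (Sum.inr j))
  have t2 := (IsHomogeneous.pderiv_aux hH (Sum.inr j)).mul
    (IsHomogeneous.pderiv_aux hF (Sum.inl j))
  rw [show (2:ℕ) - 1 = 1 from rfl, h1] at t1 t2
  exact t1.sub t2

lemma pb_hasWt (hH : HasWt γ 0 H) (hF : HasWt γ μ F) :
    HasWt γ μ (poissonBracket H F) := by
  unfold poissonBracket
  refine HasWt.sum _ _ fun j _ => ?_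
  have t1 := (hH.pderiv_inl j).mul (hF.pderiv_inr j)
  have t2 := (hH.pderiv_inr j).mul (hF.pderiv_inl j)
  rw [show (0 + γ j) + (μ - γ j) = μ by ring] at t1
  rw [show (0 - γ j) + (μ + γ j) = μ by ring] at t2
  exact t1.sub t2

end NFAux


open NFAux

/-- With `H_2 = H_ss + H_nil` the semisimple-plus-nilpotent quadratic
part, every homogeneous polynomial `P` of degree `k ≥ 3` decomposes as
`P = −{H_2, L} + P'` with `L, P'` homogeneous of degree `k` and `{H_ss, P'} = 0`. -/
theorem homogeneous_normal_form_decomposition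
    (n : ℕ) (γ : Fin n → ℂ)
    (Hss : MvPolynomial (Fin n ⊕ Fin n) ℂ)
    (hHss : Hss = ∑ j : Fin n, C (γ j) * X (Sum.inl j) * X (Sum.inr j))
    (Hnil : MvPolynomial (Fin n ⊕ Fin n) ℂ)
    (hnilHom : Hnil.IsHomogeneous 2)
    (hcomm : poissonBracket Hss Hnil = 0)
    (hnilp : ∀ P : MvPolynomial (Fin n ⊕ Fin n) ℂ,
      ∃ r : ℕ, 1 ≤ r ∧ (fun Q => poissonBracket Hnil Q)^[r] P = 0)
    (H2 : MvPolynomial (Fin n ⊕ Fin n) ℂ)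
    (hH2 : H2 = Hss + Hnil)
    (k : ℕ) (hk : 3 ≤ k)
    (P : MvPolynomial (Fin n ⊕ Fin n) ℂ)
    (hP : P.IsHomogeneous k) :
    ∃ L P' : MvPolynomial (Fin n ⊕ Fin n) ℂ,
      L.IsHomogeneous k ∧ P'.IsHomogeneous k ∧
      P = -poissonBracket H2 L + P' ∧ poissonBracket Hss P' = 0 := by
  classical
  subst hHss
  set N : MvPolynomial (Fin n ⊕ Fin n) ℂ → MvPolynomial (Fin n ⊕ Fin n) ℂ :=
    fun Q => poissonBracket Hnil Q with hN
  have hWnil : HasWt γ 0 Hnil := hasWt_of_pb_eq_zero hcomm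
  -- iterates of N preserve weight and homogeneity
  have hNit_wt : ∀ (i : ℕ) (μ : ℂ) (Q), HasWt γ μ Q → HasWt γ μ (N^[i] Q) := by
    intro i
    induction i with
    | zero => intro μ Q h; simpa using h
    | succ i ih =>
      intro μ Q h
      rw [Function.iterate_succ_apply']
      exact pb_hasWt hWnil (ih μ Q h)
  have hNit_hom : ∀ (i : ℕ) (Q : MvPolynomial (Fin n ⊕ Fin n) ℂ),
      Q.IsHomogeneous k → (N^[i] Q).IsHomogeneous k := by
    intro i
    induction i with
    | zero => intro Q h; simpa using h
    | succ i ih =>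
      intro Q h
      rw [Function.iterate_succ_apply']
      exact pb_isHomogeneous hnilHom (by omega) (ih Q h)
  -- the weight components of P
  set Pc : ℂ → MvPolynomial (Fin n ⊕ Fin n) ℂ :=
    fun μ => ∑ α ∈ P.support.filter (fun α => wt γ α = μ), monomial α (coeff α P) with hPc
  have hPcWt : ∀ μ, HasWt γ μ (Pc μ) := by
    intro μ
    refine HasWt.sum _ _ fun α hα => ?_
    intro β hβ
    have hβα : β = α := Finset.mem_singleton.mp (MvPolynomial.support_monomial_subset hβ)
    subst hβα
    exact (Finset.mem_filter.mp hα).2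
  have hPcHom : ∀ μ, (Pc μ).IsHomogeneous k := by
    intro μ
    refine MvPolynomial.IsHomogeneous.sum _ _ _ fun α hα => ?_
    refine isHomogeneous_monomial _ ?_
    rw [Finsupp.degree_eq_weight_one]
    exact hP (MvPolynomial.mem_support_iff.mp (Finset.mem_filter.mp hα).1)
  set Λ : Finset ℂ := insert 0 (P.support.image (wt γ)) with hΛ
  have hsum : ∑ μ ∈ Λ, Pc μ = P := by
    have hbase : ∑ μ ∈ P.support.image (wt γ), Pc μ = P := by
      rw [hPc]
      rw [Finset.sum_fiberwise_of_maps_to (fun α hα => Finset.mem_image_of_mem _ hα)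
        (fun α => monomial α (coeff α P))]
      exact P.support_sum_monomial_coeff
    by_cases h0 : (0 : ℂ) ∈ P.support.image (wt γ)
    · rw [hΛ, Finset.insert_eq_self.mpr h0, hbase]
    · rw [hΛ, Finset.sum_insert h0, hbase]
      have : Pc 0 = 0 := by
        show (∑ α ∈ Finset.filter (fun α => wt γ α = (0:ℂ)) P.support,
          monomial α (coeff α P)) = 0
        rw [Finset.filter_eq_empty_iff.mpr, Finset.sum_empty]
        intro α hα hwt
        exact h0 (Finset.mem_image.mpr ⟨α, hα, hwt⟩)
      rw [this, zero_add]
  -- solving on each nonzero weight component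
  set Lf : ℂ → MvPolynomial (Fin n ⊕ Fin n) ℂ :=
    fun μ => -(∑ i ∈ Finset.range ((hnilp (Pc μ)).choose),
      (((-1 : ℂ)) ^ i * (μ⁻¹) ^ (i + 1)) • N^[i] (Pc μ))
    with hLf
  have hLfWt : ∀ μ, HasWt γ μ (Lf μ) := by
    intro μ
    refine HasWt.neg (HasWt.sum _ _ fun i _ => ?_)
    exact (hNit_wt i μ _ (hPcWt μ)).smul _
  have hLfHom : ∀ μ, (Lf μ).IsHomogeneous k := by
    intro μ
    refine MvPolynomial.IsHomogeneous.neg ?_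
    refine MvPolynomial.IsHomogeneous.sum _ _ _ fun i _ => ?_
    rw [← MvPolynomial.C_mul']
    exact (hNit_hom i _ (hPcHom μ)).C_mul _
  have hkey : ∀ μ : ℂ, μ ≠ 0 → poissonBracket H2 (Lf μ) = -(Pc μ) := by
    intro μ hμ
    obtain ⟨hr1, hr0⟩ := (hnilp (Pc μ)).choose_spec
    set M : MvPolynomial (Fin n ⊕ Fin n) ℂ :=
      ∑ i ∈ Finset.range ((hnilp (Pc μ)).choose), (((-1 : ℂ)) ^ i * (μ⁻¹) ^ (i + 1)) • N^[i] (Pc μ) with hM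
    have hLM : Lf μ = -M := rfl
    have hMwt : HasWt γ μ M :=
      HasWt.sum _ _ fun i _ => (hNit_wt i μ _ (hPcWt μ)).smul _
    have key : poissonBracket H2 M = Pc μ := by
      have hsplit : poissonBracket H2 M
          = poissonBracket (∑ j : Fin n, C (γ j) * X (Sum.inl j) * X (Sum.inr j)) M
            + poissonBracket Hnil M := by
        rw [hH2, pb_add_left]
      rw [hsplit, pb_Hss_of_hasWt hMwt]
      have hNilM : poissonBracket Hnil M
          = ∑ i ∈ Finset.range ((hnilp (Pc μ)).choose),
              (((-1 : ℂ)) ^ i * (μ⁻¹) ^ (i + 1)) • N^[i + 1] (Pc μ) := by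
        rw [← pbL_apply, hM, map_sum]
        refine Finset.sum_congr rfl fun i _ => ?_
        rw [map_smul, pbL_apply, Function.iterate_succ_apply']
      rw [hNilM, hM, Finset.smul_sum, ← Finset.sum_add_distrib]
      set g : ℕ → MvPolynomial (Fin n ⊕ Fin n) ℂ :=
        fun i => (((-1 : ℂ)) ^ i * (μ⁻¹) ^ i) • N^[i] (Pc μ) with hg
      have hterm : ∀ i ∈ Finset.range ((hnilp (Pc μ)).choose),
          μ • ((((-1 : ℂ)) ^ i * (μ⁻¹) ^ (i + 1)) • N^[i] (Pc μ))
            + (((-1 : ℂ)) ^ i * (μ⁻¹) ^ (i + 1)) • N^[i + 1] (Pc μ)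
          = g i - g (i + 1) := by
        intro i _
        rw [hg]
        rw [smul_smul]
        have e1 : μ * ((-1 : ℂ) ^ i * μ⁻¹ ^ (i + 1)) = (-1 : ℂ) ^ i * μ⁻¹ ^ i := by
          rw [pow_succ]
          field_simp
        have e2 : ((-1 : ℂ)) ^ i * (μ⁻¹) ^ (i + 1) = -(((-1 : ℂ)) ^ (i + 1) * (μ⁻¹) ^ (i + 1)) := by
          ring
        rw [e1, e2, neg_smul, sub_eq_add_neg]
      rw [Finset.sum_congr rfl hterm, Finset.sum_range_sub' g ((hnilp (Pc μ)).choose)]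
      have hg0 : g 0 = Pc μ := by simp [hg]
      have hgr : g ((hnilp (Pc μ)).choose) = 0 := by
        simp only [hg]
        rw [hr0, smul_zero]
      rw [hg0, hgr, sub_zero]
    rw [hLM, ← pbL_apply, map_neg, pbL_apply, key]
  -- assembling
  refine ⟨∑ μ ∈ Λ.erase 0, Lf μ, Pc 0, ?_, hPcHom 0, ?_, ?_⟩
  · exact MvPolynomial.IsHomogeneous.sum _ _ _ fun μ _ => hLfHom μ
  · have hpbL : poissonBracket H2 (∑ μ ∈ Λ.erase 0, Lf μ)
        = ∑ μ ∈ Λ.erase 0, -(Pc μ) := by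
      rw [← pbL_apply, map_sum]
      exact Finset.sum_congr rfl fun μ hμ =>
        (pbL_apply _ _).trans (hkey μ (Finset.mem_erase.mp hμ).1)
    rw [hpbL]
    have hneg : -(∑ μ ∈ Λ.erase 0, -(Pc μ)) = ∑ μ ∈ Λ.erase 0, Pc μ := by
      simp
    rw [hneg, add_comm, Finset.add_sum_erase Λ Pc (Finset.mem_insert_self 0 _), hsum]
  · rw [pb_Hss_of_hasWt (hPcWt 0), zero_smul]
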